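/- Let l : ℝ → ℝ be bounded and differentiable with bounded derivative, and φ : ℝ → ℝ be C¹ with C_φ = ∫|φ| < ∞ and C'_φ = sup over choices tₙ ∈ [nτ,(n+1)τ] of Σₙ |φ'(t - tₙ)| < ∞. Then for the Riemann-sum approximation of the convolution, |τ Σₙ l(nτ) φ(t - nτ) - ∫ l(u) φ(t - u) du| ≤ ‖l'‖_∞ τ C_φ + ‖l‖_∞ τ² C'_φ for every t. -/

import Mathlib

open MeasureTheory Set


lemma exists_point_deriv_le (h h' : ℝ → ℝ) (hd : ∀ x, HasDerivAt h (h' x) x)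
    (a τ K : ℝ) (hτ : 0 < τ)
    (hK : (∫ u in a..(a+τ), |h u|) < K * τ^2 / 16) :
    ∃ c ∈ Icc a (a+τ), |h' c| ≤ K := by
  by_contra hcon
  push_neg at hcon
  have hc : Continuous h := by
    rw [continuous_iff_continuousAt]; exact fun x => (hd x).continuousAt
  have hnn : (0:ℝ) ≤ ∫ u in a..(a+τ), |h u| :=
    intervalIntegral.integral_nonneg (by linarith) (fun u _ => abs_nonneg _)
  have hK0 : 0 < K := by nlinarith
  -- expansion property
  have expand : ∀ x y, a ≤ x → x < y → y ≤ a + τ → K * (y - x) ≤ |h y - h x| := by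
    intro x y hax hxy hya
    obtain ⟨ξ, hξ, hsl⟩ := exists_hasDerivAt_eq_slope h h' hxy
      (hc.continuousOn) (fun z _ => hd z)
    have hξI : ξ ∈ Icc a (a+τ) := ⟨le_trans hax hξ.1.le, le_trans hξ.2.le hya⟩
    have : |h y - h x| = |h' ξ| * (y - x) := by
      rw [hsl, abs_div, abs_of_pos (by linarith : (0:ℝ) < y - x),
        div_mul_cancel₀ _ (ne_of_gt (by linarith : (0:ℝ) < y - x))]
    rw [this]
    exact mul_le_mul_of_nonneg_right (hcon ξ hξI).le (by linarith)
  -- one of two quarter intervals has |h| ≥ K τ/4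
  have quarter : (∀ x ∈ Icc a (a+τ/4), K*τ/4 ≤ |h x|) ∨
      (∀ x ∈ Icc (a+3*τ/4) (a+τ), K*τ/4 ≤ |h x|) := by
    by_contra hq
    push_neg at hq
    obtain ⟨⟨p, hp, hp2⟩, ⟨q, hq1, hq2⟩⟩ := hq
    have hpq : p < q := by
      have := hp.2; have := hq1.1; linarith
    have h1 : K * (q - p) ≤ |h q - h p| := expand p q hp.1 hpq (hq1.2)
    have h2 : |h q - h p| ≤ |h p| + |h q| := by
      calc |h q - h p| ≤ |h q| + |h p| := abs_sub _ _
        _ = |h p| + |h q| := by ring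
    have : K * (q - p) ≥ K * (τ/2) := by
      apply mul_le_mul_of_nonneg_left _ hK0.le
      have := hp.2; have := hq1.1; linarith
    nlinarith
  -- integrate
  have hii : ∀ x y : ℝ, IntervalIntegrable (fun u => |h u|) volume x y :=
    fun x y => (hc.abs).intervalIntegrable x y
  have hlow : K*τ/4 * (τ/4) ≤ ∫ u in a..(a+τ), |h u| := by
    rcases quarter with hq | hq
    · have hsplit : (∫ u in a..(a+τ/4), |h u|) + ∫ u in (a+τ/4)..(a+τ), |h u|
          = ∫ u in a..(a+τ), |h u| :=
        intervalIntegral.integral_add_adjacent_intervals (hii _ _) (hii _ _)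
      have h1 : K*τ/4 * (τ/4) ≤ ∫ u in a..(a+τ/4), |h u| := by
        have := intervalIntegral.integral_mono_on (by linarith : a ≤ a + τ/4)
          (intervalIntegrable_const) (hii _ _) (fun x hx => hq x hx)
        rw [intervalIntegral.integral_const] at this
        simpa [smul_eq_mul, mul_comm] using this
      have h2 : (0:ℝ) ≤ ∫ u in (a+τ/4)..(a+τ), |h u| :=
        intervalIntegral.integral_nonneg (by linarith) (fun u _ => abs_nonneg _)
      linarith
    · have hsplit : (∫ u in a..(a+3*τ/4), |h u|) + ∫ u in (a+3*τ/4)..(a+τ), |h u|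
          = ∫ u in a..(a+τ), |h u| :=
        intervalIntegral.integral_add_adjacent_intervals (hii _ _) (hii _ _)
      have h1 : K*τ/4 * (τ/4) ≤ ∫ u in (a+3*τ/4)..(a+τ), |h u| := by
        have := intervalIntegral.integral_mono_on (by linarith : a + 3*τ/4 ≤ a + τ)
          (intervalIntegrable_const) (hii _ _) (fun x hx => hq x hx)
        rw [intervalIntegral.integral_const] at this
        have heq : ((a+τ) - (a+3*τ/4)) = τ/4 := by ring
        rw [heq] at this
        simpa [smul_eq_mul, mul_comm] using this
      have h2 : (0:ℝ) ≤ ∫ u in a..(a+3*τ/4), |h u| :=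
        intervalIntegral.integral_nonneg (by linarith) (fun u _ => abs_nonneg _)
      linarith
  nlinarith


lemma quad_mvt (h h' : ℝ → ℝ) (hd : ∀ x, HasDerivAt h (h' x) x)
    (a τ : ℝ) (hτ : 0 < τ) :
    ∃ c ∈ Icc a (a+τ), |(∫ u in a..(a+τ), h u) - τ * h (a+τ)| ≤ τ^2 * |h' c| := by
  have hc : Continuous h := by
    rw [continuous_iff_continuousAt]; exact fun x => (hd x).continuousAt
  set G : ℝ → ℝ := fun x => (∫ u in a..x, h u) - (x - a) * h x with hG
  have hGd : ∀ x, HasDerivAt G (-((x - a) * h' x)) x := by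
    intro x
    have h1 : HasDerivAt (fun u => ∫ t in a..u, h t) (h x) x :=
      intervalIntegral.integral_hasDerivAt_right (hc.intervalIntegrable a x)
        (hc.stronglyMeasurable.stronglyMeasurableAtFilter) hc.continuousAt
    have h2 : HasDerivAt (fun x => (x - a) * h x) (1 * h x + (x - a) * h' x) x :=
      ((hasDerivAt_id x).sub_const a).mul (hd x)
    have := h1.sub h2
    exact this.congr_deriv (by ring)
  obtain ⟨c, hc1, hc2⟩ := exists_hasDerivAt_eq_slope G (fun x => -((x - a) * h' x))
    (by linarith : a < a + τ) (Continuous.continuousOn (by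
      rw [continuous_iff_continuousAt]; exact fun x => (hGd x).continuousAt))
    (fun x _ => hGd x)
  refine ⟨c, ⟨hc1.1.le, hc1.2.le⟩, ?_⟩
  have hGa : G a = 0 := by simp [hG]
  have hGb : G (a+τ) = (∫ u in a..(a+τ), h u) - τ * h (a+τ) := by
    simp only [hG]; ring_nf
  have hτ' : (a + τ - a) = τ := by ring
  rw [hGa, hGb, sub_zero, hτ'] at hc2
  have : (∫ u in a..(a+τ), h u) - τ * h (a+τ) = -((c - a) * h' c) * τ := by
    field_simp at hc2
    linarith [hc2]
  rw [this, abs_mul, abs_neg, abs_mul]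
  have h1 : |c - a| ≤ τ := by
    rw [abs_of_nonneg (by linarith [hc1.1] : (0:ℝ) ≤ c - a)]; linarith [hc1.2]
  have h2 : |h' c| ≥ 0 := abs_nonneg _
  calc |c - a| * |h' c| * |τ| ≤ τ * |h' c| * τ := by
        rw [abs_of_pos hτ]
        exact mul_le_mul_of_nonneg_right (mul_le_mul_of_nonneg_right h1 h2) hτ.le
    _ = τ^2 * |h' c| := by ring

lemma step_bound (l l' h h' : ℝ → ℝ) (Ml Ml' : ℝ)
    (hl : ∀ x, |l x| ≤ Ml) (hld : ∀ x, HasDerivAt l (l' x) x)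
    (hl' : ∀ x, |l' x| ≤ Ml')
    (hd : ∀ x, HasDerivAt h (h' x) x) (a τ : ℝ) (hτ : 0 < τ) :
    ∃ c ∈ Icc a (a+τ), |(∫ u in a..(a+τ), l u * h u) - τ * (l (a+τ) * h (a+τ))|
      ≤ Ml' * τ * (∫ u in a..(a+τ), |h u|) + Ml * τ^2 * |h' c| := by
  have hc : Continuous h := by
    rw [continuous_iff_continuousAt]; exact fun x => (hd x).continuousAt
  have hlc : Continuous l := by
    rw [continuous_iff_continuousAt]; exact fun x => (hld x).continuousAt
  have lip : ∀ x y : ℝ, |l x - l y| ≤ Ml' * |x - y| := by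
    intro x y
    have := Convex.norm_image_sub_le_of_norm_hasDerivWithin_le
      (f := l) (f' := l') (s := Set.univ)
      (fun z _ => (hld z).hasDerivWithinAt) (fun z _ => hl' z)
      convex_univ (Set.mem_univ y) (Set.mem_univ x)
    simpa [Real.norm_eq_abs] using this
  obtain ⟨c, hcI, hq⟩ := quad_mvt h h' hd a τ hτ
  refine ⟨c, hcI, ?_⟩
  set b := a + τ with hb
  have hab : a ≤ b := by simp [hb]; linarith
  have hint1 : IntervalIntegrable (fun u => l u * h u) volume a b :=
    (hlc.mul hc).intervalIntegrable a b
  have hint2 : IntervalIntegrable (fun u => l b * h u) volume a b :=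
    ((continuous_const.mul hc)).intervalIntegrable a b
  have e1 : (∫ u in a..b, (l u - l b) * h u)
      = (∫ u in a..b, l u * h u) - l b * ∫ u in a..b, h u := by
    simp_rw [sub_mul]
    rw [intervalIntegral.integral_sub hint1 hint2, intervalIntegral.integral_const_mul]
  have hsplit : (∫ u in a..b, l u * h u) - τ * (l b * h b)
      = (∫ u in a..b, (l u - l b) * h u) + l b * ((∫ u in a..b, h u) - τ * h b) := by
    rw [e1]; ring
  rw [hsplit]
  have hfirst : |∫ u in a..b, (l u - l b) * h u| ≤ Ml' * τ * ∫ u in a..b, |h u| := by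
    have habs : |∫ u in a..b, (l u - l b) * h u| ≤ ∫ u in a..b, |(l u - l b) * h u| :=
      intervalIntegral.abs_integral_le_integral_abs hab
    have hmono : (∫ u in a..b, |(l u - l b) * h u|) ≤ ∫ u in a..b, Ml' * τ * |h u| := by
      apply intervalIntegral.integral_mono_on hab
      · exact (((hlc.sub continuous_const).mul hc).abs).intervalIntegrable a b
      · exact ((continuous_const.mul hc.abs)).intervalIntegrable a b
      · intro x hx
        rw [abs_mul]
        apply mul_le_mul_of_nonneg_right _ (abs_nonneg _)
        calc |l x - l b| ≤ Ml' * |x - b| := lip x b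
          _ ≤ Ml' * τ := by
              apply mul_le_mul_of_nonneg_left _ (le_trans (abs_nonneg _) (hl' 0))
              rw [abs_of_nonpos (by simp only [hb] at hx ⊢; linarith [hx.2] : x - b ≤ 0)]
              simp only [hb] at hx ⊢; linarith [hx.1]
    rw [intervalIntegral.integral_const_mul] at hmono
    linarith
  have hsecond : |l b * ((∫ u in a..b, h u) - τ * h b)| ≤ Ml * (τ^2 * |h' c|) := by
    rw [abs_mul]
    exact mul_le_mul (hl b) hq (abs_nonneg _) (le_trans (abs_nonneg _) (hl 0))
  calc |(∫ u in a..b, (l u - l b) * h u) + l b * ((∫ u in a..b, h u) - τ * h b)|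
      ≤ |∫ u in a..b, (l u - l b) * h u| + |l b * ((∫ u in a..b, h u) - τ * h b)| :=
        abs_add_le _ _
    _ ≤ Ml' * τ * (∫ u in a..b, |h u|) + Ml * τ^2 * |h' c| := by
        rw [show Ml * τ^2 * |h' c| = Ml * (τ^2 * |h' c|) by ring]
        exact add_le_add hfirst hsecond

theorem riemann_sum_convolution_error (l l' φ φ' : ℝ → ℝ) (τ Ml Ml' Cφ C' : ℝ)
    (hτ : 0 < τ)
    (hl : ∀ x, |l x| ≤ Ml) (hlderiv : ∀ x, HasDerivAt l (l' x) x)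
    (hl' : ∀ x, |l' x| ≤ Ml')
    (hφderiv : ∀ x, HasDerivAt φ (φ' x) x)
    (hφ : Integrable φ) (hCφ : Cφ = ∫ u, |φ u|)
    (hC' : ∀ (t : ℝ) (u : ℤ → ℝ), (∀ n : ℤ, u n ∈ Set.Icc ((n : ℝ) * τ) ((n + 1) * τ)) →
      (∑' n : ℤ, |φ' (t - u n)|) ≤ C') :
    ∀ t, |τ * (∑' n : ℤ, l (n * τ) * φ (t - n * τ)) - ∫ u, l u * φ (t - u)|
      ≤ Ml' * τ * Cφ + Ml * τ ^ 2 * C' := by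
  have hMl : 0 ≤ Ml := le_trans (abs_nonneg _) (hl 0)
  have hMl' : 0 ≤ Ml' := le_trans (abs_nonneg _) (hl' 0)
  have hlc : Continuous l := by
    rw [continuous_iff_continuousAt]; exact fun x => (hlderiv x).continuousAt
  intro t
  have hder : ∀ u : ℝ, HasDerivAt (fun u => φ (t - u)) (-φ' (t - u)) u := by
    intro u
    have h1 : HasDerivAt (fun y : ℝ => t - y) (-1) u := (hasDerivAt_id u).const_sub t
    have := (hφderiv (t - u)).comp u h1
    simp [mul_comm] at this; exact this
  -- partition facts
  set s : ℤ → Set ℝ := fun n => Ioc ((n:ℝ)*τ) (((n:ℝ)+1)*τ) with hs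
  have hmeas : ∀ n : ℤ, MeasurableSet (s n) := fun n => measurableSet_Ioc
  have hle : ∀ n : ℤ, ((n:ℝ)*τ) ≤ ((n:ℝ)+1)*τ := by
    intro n; nlinarith [hτ.le]
  have hdisj : Pairwise (Function.onFun Disjoint s) := by
    intro m n hmn
    rw [Function.onFun, hs]
    simp only
    rw [Set.Ioc_disjoint_Ioc]
    rcases lt_or_gt_of_ne hmn with h | h
    · have h1 : (m:ℝ) + 1 ≤ n := by exact_mod_cast Int.add_one_le_iff.mpr h
      refine le_trans (min_le_left _ _) (le_trans ?_ (le_max_right _ _))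
      exact mul_le_mul_of_nonneg_right h1 hτ.le
    · have h1 : (n:ℝ) + 1 ≤ m := by exact_mod_cast Int.add_one_le_iff.mpr h
      refine le_trans (min_le_right _ _) (le_trans ?_ (le_max_left _ _))
      exact mul_le_mul_of_nonneg_right h1 hτ.le
  have hunion : (⋃ n : ℤ, s n) = univ := by
    ext x
    simp only [mem_iUnion, mem_univ, iff_true, hs, mem_Ioc]
    refine ⟨⌈x/τ⌉ - 1, ?_, ?_⟩
    · have h1 : ((⌈x/τ⌉:ℝ) - 1) < x/τ := by linarith [Int.ceil_lt_add_one (x/τ)]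
      have := (lt_div_iff₀ hτ).mp h1
      push_cast
      linarith
    · have h2 : x/τ ≤ (⌈x/τ⌉:ℝ) := Int.le_ceil _
      have := (div_le_iff₀ hτ).mp h2
      push_cast
      linarith
  -- integrability
  have hφt : Integrable (fun u => φ (t - u)) := hφ.comp_sub_left t
  have hg_int : Integrable (fun u => l u * φ (t - u)) :=
    hφt.bdd_mul hlc.aestronglyMeasurable (Filter.Eventually.of_forall fun x => by simpa [Real.norm_eq_abs] using hl x)
  have hφtabs : Integrable (fun u => |φ (t - u)|) := hφt.abs
  -- HasSum of pieces
  set J : ℤ → ℝ := fun n => ∫ u in ((n:ℝ)*τ)..(((n:ℝ)+1)*τ), |φ (t - u)| with hJ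
  set SI : ℤ → ℝ := fun n => ∫ u in ((n:ℝ)*τ)..(((n:ℝ)+1)*τ), l u * φ (t - u) with hSI
  have conv : ∀ (f : ℝ → ℝ) (n : ℤ), (∫ u in s n, f u) = ∫ u in ((n:ℝ)*τ)..(((n:ℝ)+1)*τ), f u :=
    fun f n => (intervalIntegral.integral_of_le (hle n)).symm
  have hJsum : HasSum J Cφ := by
    have h0 := hasSum_integral_iUnion (f := fun u => |φ (t - u)|) (μ := volume)
      hmeas hdisj (by rw [hunion]; exact hφtabs.integrableOn)
    rw [hunion] at h0
    simp only [Measure.restrict_univ] at h0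
    have heq : (fun n : ℤ => ∫ u in s n, |φ (t - u)|) = J :=
      funext fun n => conv _ n
    rw [heq] at h0
    have hCφ2 : (∫ u, |φ (t - u)|) = Cφ := by
      rw [hCφ]
      exact integral_sub_left_eq_self (fun u => |φ u|) volume t
    rwa [hCφ2] at h0
  have hSIsum : HasSum SI (∫ u, l u * φ (t - u)) := by
    have h0 := hasSum_integral_iUnion (f := fun u => l u * φ (t - u)) (μ := volume)
      hmeas hdisj (by rw [hunion]; exact hg_int.integrableOn)
    rw [hunion] at h0
    simp only [Measure.restrict_univ] at h0
    have heq : (fun n : ℤ => ∫ u in s n, l u * φ (t - u)) = SI :=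
      funext fun n => conv _ n
    rwa [heq] at h0
  have hJnn : ∀ n, 0 ≤ J n := fun n =>
    intervalIntegral.integral_nonneg (hle n) (fun u _ => abs_nonneg _)
  -- key per-interval bound with chosen points
  have key : ∀ n : ℤ, ∃ c ∈ Icc ((n:ℝ)*τ) (((n:ℝ)+1)*τ),
      |SI n - τ * (l (((n:ℝ)+1)*τ) * φ (t - ((n:ℝ)+1)*τ))|
        ≤ Ml' * τ * J n + Ml * τ^2 * |φ' (t - c)| := by
    intro n
    have := step_bound l l' (fun u => φ (t - u)) (fun u => -φ' (t - u)) Ml Ml'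
      hl hlderiv hl' hder ((n:ℝ)*τ) τ hτ
    rw [show ((n:ℝ)*τ + τ) = ((n:ℝ)+1)*τ by ring] at this
    obtain ⟨c, hc1, hc2⟩ := this
    exact ⟨c, hc1, by simpa using hc2⟩
  choose c hcmem hcbd using key
  set b : ℤ → ℝ := fun n => |φ' (t - c n)| with hb
  -- existence of a summable choice
  have hustar : ∀ n : ℤ, ∃ u ∈ Icc ((n:ℝ)*τ) (((n:ℝ)+1)*τ),
      |φ' (t - u)| ≤ 16/τ^2 * J n + (1/2:ℝ)^n.natAbs := by
    intro n
    have hKpos : J n < (16/τ^2 * J n + (1/2:ℝ)^n.natAbs) * τ^2 / 16 := by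
      have h1 : (0:ℝ) < (1/2:ℝ)^n.natAbs := by positivity
      have h2 : (0:ℝ) < τ^2 := by positivity
      have : (16/τ^2 * J n + (1/2:ℝ)^n.natAbs) * τ^2 / 16
          = J n + (1/2:ℝ)^n.natAbs * τ^2 / 16 := by field_simp
      rw [this]
      nlinarith
    have := exists_point_deriv_le (fun u => φ (t - u)) (fun u => -φ' (t - u)) hder
      ((n:ℝ)*τ) τ _ hτ (by
        rw [show ((n:ℝ)*τ + τ) = ((n:ℝ)+1)*τ by ring]
        exact hKpos)
    rw [show ((n:ℝ)*τ + τ) = ((n:ℝ)+1)*τ by ring] at this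
    obtain ⟨u, hu1, hu2⟩ := this
    exact ⟨u, hu1, by simpa using hu2⟩
  choose ustar hustar1 hustar2 using hustar
  have hgeo : Summable (fun n : ℤ => ((1:ℝ)/2)^n.natAbs) := by
    have h1 : Summable (fun n : ℕ => ((1:ℝ)/2)^n) :=
      summable_geometric_of_lt_one (by norm_num) (by norm_num)
    apply Summable.of_nat_of_neg
    · simpa using h1
    · simpa using h1
  have hbstar : Summable (fun n : ℤ => |φ' (t - ustar n)|) := by
    apply Summable.of_nonneg_of_le (fun n => abs_nonneg _) hustar2
    exact (hJsum.summable.mul_left (16/τ^2)).add hgeo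
  -- partial sums of b are bounded by C'
  have hF : ∀ F : Finset ℤ, ∑ n ∈ F, b n ≤ C' := by
    intro F
    set v : ℤ → ℝ := fun n => if n ∈ F then c n else ustar n with hv
    have hvmem : ∀ n : ℤ, v n ∈ Icc ((n:ℝ)*τ) (((n:ℝ)+1)*τ) := by
      intro n; rw [hv]; dsimp only; split_ifs
      · exact hcmem n
      · exact hustar1 n
    have hdiffsum : Summable (fun n => |φ' (t - v n)| - |φ' (t - ustar n)|) := by
      apply summable_of_ne_finset_zero (s := F)
      intro n hn
      simp [hv, if_neg hn]
    have hvsum : Summable (fun n => |φ' (t - v n)|) := by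
      have := hdiffsum.add hbstar
      refine this.congr (fun n => by ring)
    calc ∑ n ∈ F, b n = ∑ n ∈ F, |φ' (t - v n)| :=
          Finset.sum_congr rfl (fun n hn => by simp [hb, hv, if_pos hn])
      _ ≤ ∑' n, |φ' (t - v n)| := Summable.sum_le_tsum F (fun i _ => abs_nonneg _) hvsum
      _ ≤ C' := hC' t v hvmem
  have hbsum : Summable b := summable_of_sum_le (fun n => abs_nonneg _) hF
  have hbC : ∑' n, b n ≤ C' := Summable.tsum_le_of_sum_le hbsum hF
  -- error terms
  set A : ℤ → ℝ := fun n => l (((n:ℝ)+1)*τ) * φ (t - ((n:ℝ)+1)*τ) with hA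
  set E : ℤ → ℝ := fun n => SI n - τ * A n with hE
  have hEbd : ∀ n, |E n| ≤ Ml' * τ * J n + Ml * τ^2 * b n := fun n => hcbd n
  have hbound_sum : Summable (fun n => Ml' * τ * J n + Ml * τ^2 * b n) :=
    (hJsum.summable.mul_left (Ml' * τ)).add (hbsum.mul_left (Ml * τ^2))
  have hEabs : Summable (fun n => |E n|) :=
    Summable.of_nonneg_of_le (fun n => abs_nonneg _) hEbd hbound_sum
  have hEsum : Summable E := hEabs.of_abs
  have hτA : Summable (fun n => τ * A n) := by
    have := hSIsum.summable.sub hEsum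
    refine this.congr (fun n => by rw [hE]; ring)
  -- reindexing
  have hreindex : (∑' n : ℤ, l ((n:ℝ) * τ) * φ (t - (n:ℝ) * τ)) = ∑' n, A n := by
    rw [← (Equiv.addRight (1:ℤ)).tsum_eq (fun n : ℤ => l ((n:ℝ) * τ) * φ (t - (n:ℝ) * τ))]
    apply tsum_congr
    intro n
    have : ((Equiv.addRight (1:ℤ)) n : ℝ) = (n:ℝ) + 1 := by
      simp [Equiv.addRight]
    rw [this, hA]
  -- final computation
  have hmain : τ * (∑' n : ℤ, l ((n:ℝ) * τ) * φ (t - (n:ℝ) * τ)) - (∫ u, l u * φ (t - u))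
      = ∑' n, (τ * A n - SI n) := by
    rw [hreindex, ← tsum_mul_left, ← hSIsum.tsum_eq, ← Summable.tsum_sub hτA hSIsum.summable]
  rw [hmain]
  have habs : |∑' n, (τ * A n - SI n)| ≤ ∑' n, |τ * A n - SI n| := by
    have h2 : Summable fun n => ‖τ * A n - SI n‖ := by
      simp only [Real.norm_eq_abs]
      refine hEabs.congr (fun n => ?_)
      rw [hE, abs_sub_comm]
    have := norm_tsum_le_tsum_norm h2
    simpa [Real.norm_eq_abs] using this
  have heq2 : (fun n : ℤ => |τ * A n - SI n|) = fun n => |E n| := by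
    funext n; rw [hE, abs_sub_comm]
  rw [heq2] at habs
  have h3 : ∑' n, |E n| ≤ ∑' n, (Ml' * τ * J n + Ml * τ^2 * b n) :=
    Summable.tsum_le_tsum hEbd hEabs hbound_sum
  have h4 : ∑' n, (Ml' * τ * J n + Ml * τ^2 * b n)
      = Ml' * τ * Cφ + Ml * τ^2 * (∑' n, b n) := by
    rw [Summable.tsum_add (hJsum.summable.mul_left _) (hbsum.mul_left _),
      tsum_mul_left, tsum_mul_left, hJsum.tsum_eq]
  have h5 : Ml * τ^2 * (∑' n, b n) ≤ Ml * τ^2 * C' := by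
    apply mul_le_mul_of_nonneg_left hbC
    positivity
  linarith
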